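/- There is n0 ∈ ℕ such that the following holds for every n ≥ n0: if H is a B-free simplicial complex on n vertices in which every vertex u satisfies d(u) > (9/8)(n−1) + 5/16, then H contains no edge of size 4, and consequently every edge of H has size at most 3. -/

import Mathlib

open Finset

/-- `E` is the edge set of a simplicial complex: it is closed under taking subsets. -/
def IsComplex {α : Type*} [DecidableEq α] (E : Finset (Finset α)) : Prop :=
  ∀ e ∈ E, ∀ f ⊆ e, f ∈ E

/-- `H` contains a copy of `F`: an injection of the vertices mapping edges to edges. -/
def HasCopy {α β : Type*} [DecidableEq β]
    (F : Finset (Finset α)) (H : Finset (Finset β)) : Prop :=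
  ∃ f : α → β, Function.Injective f ∧ ∀ e ∈ F, e.image f ∈ H

/-- downward closure of a family of sets -/
def dClosure {α : Type*} [DecidableEq α] (S : Finset (Finset α)) : Finset (Finset α) :=
  S.biUnion Finset.powerset

/-- `ex(n,F)`: the extremal number for simplicial complexes -/
noncomputable def exSC {α : Type*} (n : ℕ) (F : Finset (Finset α)) : ℕ :=
  sSup {m | ∃ E : Finset (Finset (Fin n)), IsComplex E ∧ ¬ HasCopy F E ∧ E.card = m}

/-- `ex^(k)(n,F)`: the extremal number for `k`-uniform hypergraphs -/
noncomputable def exUnif {α : Type*} (k n : ℕ) (F : Finset (Finset α)) : ℕ :=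
  sSup {m | ∃ E : Finset (Finset (Fin n)),
    (∀ e ∈ E, e.card = k) ∧ ¬ HasCopy F E ∧ E.card = m}

/-- the complex `B`: downward closure of `{{v3,v4},{v1,v2,v3},{v1,v4,v5}}`
(vertices `v1,…,v5` are `0,…,4`) -/
def B : Finset (Finset (Fin 5)) :=
  dClosure {{2, 3}, {0, 1, 2}, {0, 3, 4}}

/-- edge set of the link `L_v` -/
def linkEdges {V : Type*} [DecidableEq V] (E : Finset (Finset V)) (v : V) :
    Finset (Finset V) :=
  (E.filter (fun e => v ∈ e)).image (fun e => e.erase v)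

/-- `d^(i)(u)`: number of `i`-edges containing `u` -/
def degI {V : Type*} [DecidableEq V] (E : Finset (Finset V)) (i : ℕ) (u : V) : ℕ :=
  (E.filter (fun e => u ∈ e ∧ e.card = i)).card

/-- `d(u)`: number of edges of size at least 2 containing `u` -/
def dDeg {V : Type*} [DecidableEq V] (E : Finset (Finset V)) (u : V) : ℕ :=
  (E.filter (fun e => u ∈ e ∧ 2 ≤ e.card)).card

lemma bgen {n : ℕ} {E : Finset (Finset (Fin n))} (hE : IsComplex E) {p a b c d : Fin n}
    (h1 : p ≠ a) (h2 : p ≠ b) (h3 : p ≠ c) (h4 : p ≠ d) (h5 : a ≠ b) (h6 : a ≠ c)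
    (h7 : a ≠ d) (h8 : b ≠ c) (h9 : b ≠ d) (h10 : c ≠ d)
    (e1 : ({p,a,b} : Finset (Fin n)) ∈ E) (e2 : ({p,c,d} : Finset (Fin n)) ∈ E)
    (e3 : ({b,c} : Finset (Fin n)) ∈ E) : HasCopy B E := by
  refine ⟨![p,a,b,c,d], ?_, ?_⟩
  · intro i j hij
    fin_cases i <;> fin_cases j <;> simp_all
  · intro e he
    have hB : ∀ e ∈ B, e ⊆ ({2,3} : Finset (Fin 5)) ∨ e ⊆ {0,1,2} ∨ e ⊆ {0,3,4} := by decide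
    have him : ∀ (s : Finset (Fin 5)), e ⊆ s →
        e.image ![p,a,b,c,d] ⊆ s.image ![p,a,b,c,d] := fun s hs => Finset.image_subset_image hs
    rcases hB e he with h | h | h
    · exact hE _ e3 _ ((him _ h).trans (by simp [Finset.image_insert]))
    · exact hE _ e1 _ ((him _ h).trans (by simp [Finset.image_insert]))
    · exact hE _ e2 _ ((him _ h).trans (by simp [Finset.image_insert]))

lemma getD_min_mem {α : Type*} [LinearOrder α] (s : Finset α) (h : s.Nonempty) (d : α) :
    s.min.getD d ∈ s := by
  have h1 : s.min = some (s.min' h) := by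
    rw [← Finset.coe_min']
    rfl
  rw [h1]
  simpa using s.min'_mem h

section Main
variable {n : ℕ} (E : Finset (Finset (Fin n))) (Q : Finset (Fin n))

/-- outside 2-neighbours of `p` -/
def outN (p : Fin n) : Finset (Fin n) :=
  Finset.univ.filter (fun a => a ∉ Q ∧ a ≠ p ∧ ({p, a} : Finset (Fin n)) ∈ E)

/-- link-graph neighbourhood of `a` at `p`, outside `Q` -/
def nbr (p a : Fin n) : Finset (Fin n) :=
  Finset.univ.filter (fun b => b ∉ Q ∧ b ≠ p ∧ b ≠ a ∧ ({p, a, b} : Finset (Fin n)) ∈ E)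

/-- active vertices at `p` -/
def Ap (p : Fin n) : Finset (Fin n) :=
  Finset.univ.filter (fun a => a ∉ Q ∧ a ≠ p ∧ (nbr E Q p a).Nonempty)

variable {E Q}

lemma mem_nbr {p a b : Fin n} :
    b ∈ nbr E Q p a ↔ b ∉ Q ∧ b ≠ p ∧ b ≠ a ∧ ({p, a, b} : Finset (Fin n)) ∈ E := by
  simp [nbr]

lemma mem_Ap {p a : Fin n} :
    a ∈ Ap E Q p ↔ a ∉ Q ∧ a ≠ p ∧ (nbr E Q p a).Nonempty := by
  simp [Ap]

lemma mem_outN {p a : Fin n} :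
    a ∈ outN E Q p ↔ a ∉ Q ∧ a ≠ p ∧ ({p, a} : Finset (Fin n)) ∈ E := by
  simp [outN]

lemma neQ {Q : Finset (Fin n)} {x a : Fin n} (hx : x ∈ Q) (ha : a ∉ Q) : x ≠ a :=
  fun h => ha (h ▸ hx)

lemma nbr_symm {p a b : Fin n} (ha : a ∉ Q) (hap : a ≠ p) (hb : b ∈ nbr E Q p a) :
    a ∈ nbr E Q p b := by
  rw [mem_nbr] at hb ⊢
  refine ⟨ha, hap, fun h => hb.2.2.1 h.symm, ?_⟩
  have : ({p, b, a} : Finset (Fin n)) = {p, a, b} := by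
    ext x; simp; tauto
  rw [this]; exact hb.2.2.2

variable (hE : IsComplex E) (hQE : Q ∈ E) (hQ4 : Q.card = 4) (hBf : ¬ HasCopy B E)

section L
include hE hQE hQ4 hBf

/-- L1: no 3-edge with two vertices in Q and one outside -/
lemma L1 {x y a : Fin n} (hx : x ∈ Q) (hy : y ∈ Q) (hxy : x ≠ y) (ha : a ∉ Q)
    (he : ({x, y, a} : Finset (Fin n)) ∈ E) : False := by
  have h2 : ((Q.erase y).erase x).card = 2 := by
    rw [Finset.card_erase_of_mem (Finset.mem_erase.2 ⟨hxy, hx⟩), Finset.card_erase_of_mem hy, hQ4]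
  obtain ⟨t, s, hts, hst⟩ := Finset.card_eq_two.1 h2
  have ht : t ∈ (Q.erase y).erase x := hst ▸ (by simp)
  have hs : s ∈ (Q.erase y).erase x := hst ▸ (by simp)
  simp only [Finset.mem_erase] at ht hs
  -- bgen p := x, a := t, b := s, c := y, d := a
  refine hBf (bgen hE (Ne.symm ht.1) (Ne.symm hs.1) hxy (neQ hx ha) hts
    (ht.2.1) (neQ ht.2.2 ha) (hs.2.1) (neQ hs.2.2 ha)
    (neQ hy ha) ?_ ?_ ?_)
  · refine hE _ hQE _ ?_
    intro z hz; simp at hz; rcases hz with h|h|h <;> subst h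
    exacts [hx, ht.2.2, hs.2.2]
  · exact he
  · refine hE _ hQE _ ?_
    intro z hz; simp at hz; rcases hz with h|h <;> subst h
    exacts [hs.2.2, hy]

/-- L2: an active vertex has no 2-edge to another vertex of Q -/
lemma L2 {r q a b : Fin n} (hr : r ∈ Q) (hq : q ∈ Q) (hrq : r ≠ q) (ha : a ∉ Q) (hb : b ∉ Q)
    (hab : a ≠ b) (he : ({r, a, b} : Finset (Fin n)) ∈ E)
    (he2 : ({q, a} : Finset (Fin n)) ∈ E) : False := by
  have h2 : ((Q.erase q).erase r).card = 2 := by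
    rw [Finset.card_erase_of_mem (Finset.mem_erase.2 ⟨hrq, hr⟩), Finset.card_erase_of_mem hq, hQ4]
  have hne : ((Q.erase q).erase r).Nonempty := by rw [← Finset.card_pos, h2]; omega
  obtain ⟨t, ht⟩ := hne
  simp only [Finset.mem_erase] at ht
  -- bgen p := r, a' := t, b' := q, c' := a, d' := b
  refine hBf (bgen hE (Ne.symm ht.1) hrq (neQ hr ha) (neQ hr hb)
    (ht.2.1) (neQ ht.2.2 ha) (neQ ht.2.2 hb)
    (neQ hq ha) (neQ hq hb) hab ?_ he ?_)
  · refine hE _ hQE _ ?_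
    intro z hz; simp at hz; rcases hz with h|h|h <;> subst h
    exacts [hr, ht.2.2, hq]
  · exact he2

end L

/-- L3: no P4 in the link graph of any p (not needing Q) -/
lemma L3 (hE : IsComplex E) (hBf : ¬ HasCopy B E) {p a b c d : Fin n}
    (h1 : p ≠ a) (h2 : p ≠ b) (h3 : p ≠ c) (h4 : p ≠ d) (h5 : a ≠ b) (h6 : a ≠ c)
    (h7 : a ≠ d) (h8 : b ≠ c) (h9 : b ≠ d) (h10 : c ≠ d)
    (e1 : ({p,a,b} : Finset (Fin n)) ∈ E) (e2 : ({p,c,d} : Finset (Fin n)) ∈ E)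
    (e3 : ({p,b,c} : Finset (Fin n)) ∈ E) : False := by
  refine hBf (bgen hE h1 h2 h3 h4 h5 h6 h7 h8 h9 h10 e1 e2 (hE _ e3 _ ?_))
  intro z hz; simp at hz; rcases hz with h|h <;> subst h <;> simp

end Main

section Count
variable {n : ℕ} {E : Finset (Finset (Fin n))} {Q : Finset (Fin n)} {p : Fin n}

lemma triple_mem (hE : IsComplex E) {e : Finset (Fin n)} {x y z : Fin n}
    (he : e ∈ E) (hx : x ∈ e) (hy : y ∈ e) (hz : z ∈ e) :
    ({x, y, z} : Finset (Fin n)) ∈ E := by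
  refine hE _ he _ ?_
  intro w hw; simp at hw; rcases hw with h|h|h <;> subst h <;> assumption

lemma pair_mem (hE : IsComplex E) {e : Finset (Fin n)} {x y : Fin n}
    (he : e ∈ E) (hx : x ∈ e) (hy : y ∈ e) :
    ({x, y} : Finset (Fin n)) ∈ E := by
  refine hE _ he _ ?_
  intro w hw; simp at hw; rcases hw with h|h <;> subst h <;> assumption

lemma tri_comm (x y z : Fin n) : ({x, y, z} : Finset (Fin n)) = {x, z, y} := by
  ext w; simp; tauto

variable (hE : IsComplex E) (hQE : Q ∈ E) (hQ4 : Q.card = 4) (hBf : ¬ HasCopy B E)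
  (hp : p ∈ Q)
include hE hQE hQ4 hBf hp

/-- every edge at p of size ≥ 2 not inside Q meets Q only in p -/
lemma interQ {e : Finset (Fin n)} (he : e ∈ E) (hpe : p ∈ e) (hnq : ¬ e ⊆ Q)
    {q : Fin n} (hq : q ∈ e) (hqQ : q ∈ Q) : q = p := by
  by_contra hqp
  obtain ⟨a, hae, haQ⟩ := Finset.not_subset.1 hnq
  have hap : a ≠ p := neQ hp haQ |>.symm
  have haq : a ≠ q := neQ hqQ haQ |>.symm
  exact L1 hE hQE hQ4 hBf hp hqQ (Ne.symm hqp) haQ (triple_mem hE he hpe hq hae)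

lemma mem_nbr_of_mem {e : Finset (Fin n)} (he : e ∈ E) (hpe : p ∈ e) (hnq : ¬ e ⊆ Q)
    {a b : Fin n} (ha : a ∈ e) (hb : b ∈ e) (hbp : b ≠ p) (hba : b ≠ a) :
    b ∈ nbr E Q p a := by
  rw [mem_nbr]
  exact ⟨fun h => hbp (interQ hE hQE hQ4 hBf hp he hpe hnq hb h), hbp, hba,
    triple_mem hE he hpe ha hb⟩

lemma mem_Ap_of_mem {e : Finset (Fin n)} (he : e ∈ E) (hpe : p ∈ e) (hnq : ¬ e ⊆ Q)
    (hc : 3 ≤ e.card) {a : Fin n} (ha : a ∈ e) (hap : a ≠ p) : a ∈ Ap E Q p := by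
  have h2 : 1 ≤ ((e.erase a).erase p).card := by
    rw [Finset.card_erase_of_mem (Finset.mem_erase.2 ⟨Ne.symm hap, hpe⟩),
      Finset.card_erase_of_mem ha]
    omega
  obtain ⟨b, hb⟩ := Finset.card_pos.1 h2
  simp only [Finset.mem_erase] at hb
  rw [mem_Ap]
  refine ⟨fun h => hap (interQ hE hQE hQ4 hBf hp he hpe hnq ha h), hap,
    ⟨b, mem_nbr_of_mem hE hQE hQ4 hBf hp he hpe hnq ha hb.2.2 hb.1 hb.2.1⟩⟩

end Count

section Count2
variable {n : ℕ} {E : Finset (Finset (Fin n))} {Q : Finset (Fin n)} {p : Fin n}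

variable (hE : IsComplex E) (hQE : Q ∈ E) (hQ4 : Q.card = 4) (hBf : ¬ HasCopy B E)
  (hp : p ∈ Q)
include hE hQE hQ4 hBf hp

omit hQE hQ4 hp in
lemma card_le4 {e : Finset (Fin n)} (he : e ∈ E) (hpe : p ∈ e) (hnq : ¬ e ⊆ Q) :
    e.card ≤ 4 := by
  by_contra hc
  push_neg at hc
  have hs : 4 ≤ (e.erase p).card := by
    rw [Finset.card_erase_of_mem hpe]; omega
  set s := e.erase p with hsdef
  obtain ⟨x, hx⟩ := Finset.card_pos.1 (by omega : 0 < s.card)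
  have h1 : 3 ≤ (s.erase x).card := by rw [Finset.card_erase_of_mem hx]; omega
  obtain ⟨y, hy⟩ := Finset.card_pos.1 (by omega : 0 < (s.erase x).card)
  have h2 : 2 ≤ ((s.erase x).erase y).card := by rw [Finset.card_erase_of_mem hy]; omega
  obtain ⟨v, hv⟩ := Finset.card_pos.1 (by omega : 0 < ((s.erase x).erase y).card)
  have h3 : 1 ≤ (((s.erase x).erase y).erase v).card := by
    rw [Finset.card_erase_of_mem hv]; omega
  obtain ⟨w, hw⟩ := Finset.card_pos.1 h3
  simp only [Finset.mem_erase] at hy hv hw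
  have hxs : x ∈ s := hx
  have hys : y ∈ s := hy.2
  have hvs : v ∈ s := hv.2.2
  have hws : w ∈ s := hw.2.2.2
  have hmem : ∀ z ∈ s, z ∈ e ∧ z ≠ p := by
    intro z hz; rw [hsdef, Finset.mem_erase] at hz; exact ⟨hz.2, hz.1⟩
  obtain ⟨hxe, hxp⟩ := hmem x hxs
  obtain ⟨hye, hyp⟩ := hmem y hys
  obtain ⟨hve, hvp⟩ := hmem v hvs
  obtain ⟨hwe, hwp⟩ := hmem w hws
  exact L3 hE hBf (Ne.symm hxp) (Ne.symm hyp) (Ne.symm hvp) (Ne.symm hwp)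
    (Ne.symm hy.1) (Ne.symm hv.2.1) (Ne.symm hw.2.2.1) (Ne.symm hv.1) (Ne.symm hw.2.1)
    (Ne.symm hw.1)
    (triple_mem hE he hpe hxe hye) (triple_mem hE he hpe hve hwe)
    (triple_mem hE he hpe hye hve)

/-- two distinct 4-edges at `p` (not inside Q) have disjoint links -/
lemma four_disj {e e' : Finset (Fin n)} (he : e ∈ E) (hpe : p ∈ e) (hnq : ¬ e ⊆ Q)
    (hc : e.card = 4) (he' : e' ∈ E) (hpe' : p ∈ e') (hnq' : ¬ e' ⊆ Q) (hc' : e'.card = 4)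
    (hne : e ≠ e') {v : Fin n} (hv : v ∈ e.erase p) (hv' : v ∈ e'.erase p) : False := by
  have hcc : (e.erase p).card = 3 := by rw [Finset.card_erase_of_mem hpe, hc]
  have hcc' : (e'.erase p).card = 3 := by rw [Finset.card_erase_of_mem hpe', hc']
  have hnee : e.erase p ≠ e'.erase p := by
    intro h
    exact hne (by rw [← Finset.insert_erase hpe, ← Finset.insert_erase hpe', h])
  have hns : ¬ e'.erase p ⊆ e.erase p := by
    intro h
    exact hnee (Finset.eq_of_subset_of_card_le h (by omega)).symm
  obtain ⟨w, hwe', hwe⟩ := Finset.not_subset.1 hns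
  -- e.erase p = {v, x, y}
  have h2 : ((e.erase p).erase v).card = 2 := by rw [Finset.card_erase_of_mem hv, hcc]
  obtain ⟨x, y, hxy, hxyeq⟩ := Finset.card_eq_two.1 h2
  have hxm : x ∈ (e.erase p).erase v := hxyeq ▸ (by simp)
  have hym : y ∈ (e.erase p).erase v := hxyeq ▸ (by simp)
  simp only [Finset.mem_erase] at hxm hym hv hv' hwe'
  have hwx : x ≠ w := fun h => hwe (h ▸ Finset.mem_erase.2 hxm.2)
  have hwy : y ≠ w := fun h => hwe (h ▸ Finset.mem_erase.2 hym.2)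
  have hwv : v ≠ w := fun h => hwe (h ▸ Finset.mem_erase.2 ⟨hv.1, hv.2⟩)
  have hxe : x ∈ e := hxm.2.2
  have hxp : x ≠ p := hxm.2.1
  have hye : y ∈ e := hym.2.2
  have hyp : y ≠ p := hym.2.1
  have hve : v ∈ e := hv.2
  have hvp : v ≠ p := hv.1
  have hwp : w ≠ p := hwe'.1
  have hwee' : w ∈ e' := hwe'.2
  exact L3 hE hBf (Ne.symm hxp) (Ne.symm hyp) (Ne.symm hvp) (Ne.symm hwp)
    hxy hxm.1 hwx hym.1 hwy hwv
    (triple_mem hE he hpe hxe hye) (triple_mem hE he' hpe' hv'.2 hwee')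
    (triple_mem hE he hpe hye hve)

end Count2

section Count3
variable {n : ℕ} {E : Finset (Finset (Fin n))} {Q : Finset (Fin n)} {p : Fin n}

variable (hE : IsComplex E) (hQE : Q ∈ E) (hQ4 : Q.card = 4) (hBf : ¬ HasCopy B E)
  (hp : p ∈ Q)
include hE hQE hQ4 hBf hp

/-- key structure for "triangle" edges: both endpoints of the pair have link-degree ≥ 2 -/
lemma T3b_key {e : Finset (Fin n)} (he : e ∈ E) (hpe : p ∈ e) (hc : e.card = 3)
    (hnq : ¬ e ⊆ Q) (hdeg : ∀ x ∈ e.erase p, (nbr E Q p x).card ≠ 1) :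
    nbr E Q p (((nbr E Q p ((e.erase p).min.getD p)) \ (e.erase p)).min.getD p) = e.erase p ∧
    (((nbr E Q p ((e.erase p).min.getD p)) \ (e.erase p)).min.getD p) ∈ Ap E Q p := by
  set s := e.erase p with hsdef
  have hs2 : s.card = 2 := by rw [hsdef, Finset.card_erase_of_mem hpe, hc]
  have hsne : s.Nonempty := Finset.card_pos.1 (by omega)
  set a := s.min.getD p with hadef
  have ha : a ∈ s := getD_min_mem s hsne p
  have h1 : (s.erase a).card = 1 := by rw [Finset.card_erase_of_mem ha, hs2]
  obtain ⟨b, hbeq⟩ := Finset.card_eq_one.1 h1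
  have hb : b ∈ s.erase a := hbeq ▸ (by simp)
  rw [Finset.mem_erase] at hb
  have hseq : s = {a, b} := by
    rw [← Finset.insert_erase ha, hbeq]
  have hmem : ∀ z ∈ s, z ∈ e ∧ z ≠ p := by
    intro z hz; rw [hsdef, Finset.mem_erase] at hz; exact ⟨hz.2, hz.1⟩
  obtain ⟨hae, hap⟩ := hmem a ha
  obtain ⟨hbe, hbp⟩ := hmem b hb.2
  have hban : b ∈ nbr E Q p a :=
    mem_nbr_of_mem hE hQE hQ4 hBf hp he hpe hnq hae hbe hbp hb.1
  have haQ : a ∉ Q := fun h => hap (interQ hE hQE hQ4 hBf hp he hpe hnq hae h)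
  have hbQ : b ∉ Q := (mem_nbr.1 hban).1
  have haan : a ∈ nbr E Q p b := nbr_symm haQ hap hban
  -- degree of a is ≥ 2
  have hlta : 1 < (nbr E Q p a).card := by
    have h0 : 0 < (nbr E Q p a).card := Finset.card_pos.2 ⟨b, hban⟩
    have := hdeg a ha
    omega
  obtain ⟨c0, hc0, hc0b⟩ := Finset.exists_mem_ne hlta b
  have hc0s : c0 ∉ s := by
    rw [hseq]; simp only [Finset.mem_insert, Finset.mem_singleton]
    push_neg
    exact ⟨(mem_nbr.1 hc0).2.2.1, hc0b⟩
  have hsdne : ((nbr E Q p a) \ s).Nonempty := ⟨c0, Finset.mem_sdiff.2 ⟨hc0, hc0s⟩⟩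
  set c := ((nbr E Q p a) \ s).min.getD p with hcdef
  have hcm : c ∈ (nbr E Q p a) \ s := getD_min_mem _ hsdne p
  rw [Finset.mem_sdiff] at hcm
  obtain ⟨hcn, hcs⟩ := hcm
  obtain ⟨hcQ, hcp, hca, hpac⟩ := mem_nbr.1 hcn
  have hcb : c ≠ b := fun h => hcs (by rw [hseq]; simp [h])
  -- b ∈ nbr c
  have hltb : 1 < (nbr E Q p b).card := by
    have h0 : 0 < (nbr E Q p b).card := Finset.card_pos.2 ⟨a, haan⟩
    have := hdeg b hb.2
    omega
  obtain ⟨d, hd, hda⟩ := Finset.exists_mem_ne hltb a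
  obtain ⟨hdQ, hdp, hdb, hpbd⟩ := mem_nbr.1 hd
  have hdc : d = c := by
    by_contra hdc
    exact L3 hE hBf (Ne.symm hcp) (Ne.symm hap) (Ne.symm hbp) (Ne.symm hdp)
      hca hcb (fun h => hdc h.symm) (Ne.symm hb.1) (Ne.symm hda) (Ne.symm hdb)
      (tri_comm p a c ▸ hpac) hpbd ((mem_nbr.1 hban).2.2.2)
  have hbcn : b ∈ nbr E Q p c := hdc ▸ (nbr_symm hbQ hbp (hdc ▸ hd))
  have hacn : a ∈ nbr E Q p c := nbr_symm haQ hap hcn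
  have hkey : nbr E Q p c = s := by
    ext x
    constructor
    · intro hx
      obtain ⟨hxQ, hxp, hxc, hpcx⟩ := mem_nbr.1 hx
      by_contra hxs
      have hxa : x ≠ a := fun h => hxs (h ▸ ha)
      have hxb : x ≠ b := fun h => hxs (h ▸ hb.2)
      exact L3 hE hBf (Ne.symm hxp) (Ne.symm hcp) (Ne.symm hap) (Ne.symm hbp)
        hxc hxa hxb hca hcb hb.1.symm
        (tri_comm p c x ▸ hpcx) ((mem_nbr.1 hban).2.2.2) (tri_comm p a c ▸ hpac)
    · intro hx
      rw [hseq] at hx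
      simp only [Finset.mem_insert, Finset.mem_singleton] at hx
      rcases hx with h | h <;> subst h
      exacts [hacn, hbcn]
  exact ⟨hkey, mem_Ap.2 ⟨hcQ, hcp, ⟨a, hacn⟩⟩⟩

end Count3

section Count4
variable {n : ℕ} {E : Finset (Finset (Fin n))} {Q : Finset (Fin n)} {p : Fin n}

variable (hE : IsComplex E) (hQE : Q ∈ E) (hQ4 : Q.card = 4) (hBf : ¬ HasCopy B E)
  (hp : p ∈ Q)
include hE hQE hQ4 hBf hp

lemma card_T4 :
    (E.filter (fun e => p ∈ e ∧ e.card = 4 ∧ ¬ e ⊆ Q)).card ≤ (Ap E Q p).card := by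
  apply Finset.card_le_card_of_injOn (fun e => (e.erase p).min.getD p)
  · intro e he
    rw [Finset.mem_coe, Finset.mem_filter] at he
    obtain ⟨heE, hpe, hc, hnq⟩ := he
    have hne : (e.erase p).Nonempty := by
      rw [← Finset.card_pos, Finset.card_erase_of_mem hpe, hc]; omega
    have hm := getD_min_mem _ hne p
    rw [Finset.mem_erase] at hm
    exact mem_Ap_of_mem hE hQE hQ4 hBf hp heE hpe hnq (by omega) hm.2 hm.1
  · intro e he e' he' heq
    dsimp only at heq
    simp only [Finset.coe_filter, Set.mem_setOf_eq] at he he'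
    obtain ⟨heE, hpe, hc, hnq⟩ := he
    obtain ⟨heE', hpe', hc', hnq'⟩ := he'
    by_contra hne
    have hn1 : (e.erase p).Nonempty := by
      rw [← Finset.card_pos, Finset.card_erase_of_mem hpe, hc]; omega
    have hn2 : (e'.erase p).Nonempty := by
      rw [← Finset.card_pos, Finset.card_erase_of_mem hpe', hc']; omega
    have hm1 := getD_min_mem _ hn1 p
    have hm2 := getD_min_mem _ hn2 p
    rw [heq] at hm1
    exact four_disj hE hQE hQ4 hBf hp heE hpe hnq hc heE' hpe' hnq' hc' hne hm1 hm2

lemma card_T3a :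
    (E.filter (fun e => p ∈ e ∧ e.card = 3 ∧ ¬ e ⊆ Q ∧
      ∃ x ∈ e.erase p, (nbr E Q p x).card = 1)).card ≤ (Ap E Q p).card := by
  apply Finset.card_le_card_of_injOn
    (fun e => ((e.erase p).filter (fun x => (nbr E Q p x).card = 1)).min.getD p)
  · intro e he
    rw [Finset.mem_coe, Finset.mem_filter] at he
    obtain ⟨heE, hpe, hc, hnq, hx⟩ := he
    have hne : ((e.erase p).filter (fun x => (nbr E Q p x).card = 1)).Nonempty := by
      obtain ⟨x, hx1, hx2⟩ := hx
      exact ⟨x, Finset.mem_filter.2 ⟨hx1, hx2⟩⟩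
    have hm := getD_min_mem _ hne p
    rw [Finset.mem_filter, Finset.mem_erase] at hm
    exact mem_Ap_of_mem hE hQE hQ4 hBf hp heE hpe hnq (by omega) hm.1.2 hm.1.1
  · intro e he e' he' heq
    dsimp only at heq
    simp only [Finset.coe_filter, Set.mem_setOf_eq] at he he'
    obtain ⟨heE, hpe, hc, hnq, hx⟩ := he
    obtain ⟨heE', hpe', hc', hnq', hx'⟩ := he'
    -- the common vertex v
    set v := ((e.erase p).filter (fun x => (nbr E Q p x).card = 1)).min.getD p with hv
    have hne1 : ((e.erase p).filter (fun x => (nbr E Q p x).card = 1)).Nonempty := by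
      obtain ⟨x, hx1, hx2⟩ := hx
      exact ⟨x, Finset.mem_filter.2 ⟨hx1, hx2⟩⟩
    have hne2 : ((e'.erase p).filter (fun x => (nbr E Q p x).card = 1)).Nonempty := by
      obtain ⟨x, hx1, hx2⟩ := hx'
      exact ⟨x, Finset.mem_filter.2 ⟨hx1, hx2⟩⟩
    have hm1 := getD_min_mem _ hne1 p
    have hm2 := getD_min_mem _ hne2 p
    rw [← heq] at hm2
    rw [Finset.mem_filter, Finset.mem_erase] at hm1 hm2
    obtain ⟨⟨hvp, hve⟩, hdeg⟩ := hm1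
    obtain ⟨⟨_, hve'⟩, _⟩ := hm2
    -- recover the second vertex of each edge
    have hother : ∀ (f : Finset (Fin n)), f ∈ E → p ∈ f → f.card = 3 → ¬ f ⊆ Q →
        v ∈ f → ∃ b, b ∈ nbr E Q p v ∧ f = {p, v, b} := by
      intro f hf hpf hcf hnqf hvf
      have h1 : ((f.erase p).erase v).card = 1 := by
        rw [Finset.card_erase_of_mem (Finset.mem_erase.2 ⟨hvp, hvf⟩),
          Finset.card_erase_of_mem hpf, hcf]
      obtain ⟨b, hbeq⟩ := Finset.card_eq_one.1 h1
      have hb : b ∈ (f.erase p).erase v := hbeq ▸ (by simp)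
      simp only [Finset.mem_erase] at hb
      refine ⟨b, mem_nbr_of_mem hE hQE hQ4 hBf hp hf hpf hnqf hvf hb.2.2 hb.2.1 hb.1, ?_⟩
      rw [← Finset.insert_erase hpf, ← Finset.insert_erase (Finset.mem_erase.2 ⟨hvp, hvf⟩), hbeq]
    obtain ⟨b, hbn, hbeq⟩ := hother e heE hpe hc hnq hve
    obtain ⟨b', hbn', hbeq'⟩ := hother e' heE' hpe' hc' hnq' hve'
    have hsing : b = b' := by
      obtain ⟨c, hceq⟩ := Finset.card_eq_one.1 hdeg
      rw [hceq, Finset.mem_singleton] at hbn hbn'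
      rw [hbn, hbn']
    rw [hbeq, hbeq', hsing]

lemma card_T3b :
    (E.filter (fun e => p ∈ e ∧ e.card = 3 ∧ ¬ e ⊆ Q ∧
      ∀ x ∈ e.erase p, (nbr E Q p x).card ≠ 1)).card ≤ (Ap E Q p).card := by
  apply Finset.card_le_card_of_injOn
    (fun e => ((nbr E Q p ((e.erase p).min.getD p)) \ (e.erase p)).min.getD p)
  · intro e he
    rw [Finset.mem_coe, Finset.mem_filter] at he
    obtain ⟨heE, hpe, hc, hnq, hdeg⟩ := he
    exact (T3b_key hE hQE hQ4 hBf hp heE hpe hc hnq hdeg).2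
  · intro e he e' he' heq
    dsimp only at heq
    simp only [Finset.coe_filter, Set.mem_setOf_eq] at he he'
    obtain ⟨heE, hpe, hc, hnq, hdeg⟩ := he
    obtain ⟨heE', hpe', hc', hnq', hdeg'⟩ := he'
    have h1 := (T3b_key hE hQE hQ4 hBf hp heE hpe hc hnq hdeg).1
    have h2 := (T3b_key hE hQE hQ4 hBf hp heE' hpe' hc' hnq' hdeg').1
    rw [heq] at h1
    have h3 : e.erase p = e'.erase p := h1.symm.trans h2
    rw [← Finset.insert_erase hpe, ← Finset.insert_erase hpe', h3]

end Count4

section Final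
variable {n : ℕ} {E : Finset (Finset (Fin n))} {Q : Finset (Fin n)}

variable (hE : IsComplex E) (hQE : Q ∈ E) (hQ4 : Q.card = 4) (hBf : ¬ HasCopy B E)
include hE hQE hQ4 hBf

lemma deg_bound {p : Fin n} (hp : p ∈ Q) :
    dDeg E p ≤ 16 + (outN E Q p).card + 3 * (Ap E Q p).card := by
  classical
  set S0 := E.filter (fun e => p ∈ e ∧ 2 ≤ e.card ∧ e ⊆ Q) with hS0
  set S1 := E.filter (fun e => p ∈ e ∧ e.card = 2 ∧ ¬ e ⊆ Q) with hS1
  set T3a := E.filter (fun e => p ∈ e ∧ e.card = 3 ∧ ¬ e ⊆ Q ∧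
      ∃ x ∈ e.erase p, (nbr E Q p x).card = 1) with hT3a
  set T3b := E.filter (fun e => p ∈ e ∧ e.card = 3 ∧ ¬ e ⊆ Q ∧
      ∀ x ∈ e.erase p, (nbr E Q p x).card ≠ 1) with hT3b
  set T4 := E.filter (fun e => p ∈ e ∧ e.card = 4 ∧ ¬ e ⊆ Q) with hT4
  have hsub : E.filter (fun e => p ∈ e ∧ 2 ≤ e.card) ⊆ S0 ∪ S1 ∪ T3a ∪ T3b ∪ T4 := by
    intro e he
    rw [Finset.mem_filter] at he
    obtain ⟨heE, hpe, hc⟩ := he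
    simp only [Finset.mem_union, hS0, hS1, hT3a, hT3b, hT4, Finset.mem_filter]
    by_cases hq : e ⊆ Q
    · exact Or.inl (Or.inl (Or.inl (Or.inl ⟨heE, hpe, hc, hq⟩)))
    · have hle4 := card_le4 hE hBf heE hpe hq
      have hcase : e.card = 2 ∨ e.card = 3 ∨ e.card = 4 := by omega
      rcases hcase with h | h | h
      · exact Or.inl (Or.inl (Or.inl (Or.inr ⟨heE, hpe, h, hq⟩)))
      · by_cases hex : ∃ x ∈ e.erase p, (nbr E Q p x).card = 1
        · exact Or.inl (Or.inl (Or.inr ⟨heE, hpe, h, hq, hex⟩))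
        · push_neg at hex
          exact Or.inl (Or.inr ⟨heE, hpe, h, hq, hex⟩)
      · exact Or.inr ⟨heE, hpe, h, hq⟩
  have hS0c : S0.card ≤ 16 := by
    have : S0 ⊆ Q.powerset := by
      intro e he
      rw [hS0, Finset.mem_filter] at he
      exact Finset.mem_powerset.2 he.2.2.2
    calc S0.card ≤ Q.powerset.card := Finset.card_le_card this
    _ = 2 ^ 4 := by rw [Finset.card_powerset, hQ4]
    _ = 16 := by norm_num
  have hS1c : S1.card ≤ (outN E Q p).card := by
    apply Finset.card_le_card_of_injOn (fun e => (e.erase p).min.getD p)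
    · intro e he
      rw [hS1, Finset.mem_coe, Finset.mem_filter] at he
      obtain ⟨heE, hpe, hc, hnq⟩ := he
      have h1 : (e.erase p).card = 1 := by rw [Finset.card_erase_of_mem hpe, hc]
      have hm := getD_min_mem (e.erase p) (by rw [← Finset.card_pos, h1]; omega) p
      have heeq : e = {p, (e.erase p).min.getD p} := by
        have huniq := Finset.card_le_one.1 (le_of_eq h1)
        have hsing : e.erase p = {(e.erase p).min.getD p} :=
          Finset.eq_singleton_iff_unique_mem.2 ⟨hm, fun y hy => huniq y hy _ hm⟩
        conv_lhs => rw [← Finset.insert_erase hpe, hsing]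
      rw [Finset.mem_erase] at hm
      have haQ : (e.erase p).min.getD p ∉ Q := by
        intro haQ
        refine hnq ?_
        conv_lhs => rw [heeq]
        intro z hz
        simp only [Finset.mem_insert, Finset.mem_singleton] at hz
        rcases hz with h|h <;> subst h
        exacts [hp, haQ]
      exact mem_outN.2 ⟨haQ, hm.1, heeq ▸ heE⟩
    · intro e he e' he' heq
      dsimp only at heq
      simp only [hS1, Finset.coe_filter, Set.mem_setOf_eq] at he he'
      obtain ⟨heE, hpe, hc, hnq⟩ := he
      obtain ⟨heE', hpe', hc', hnq'⟩ := he'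
      have h1 : (e.erase p).card = 1 := by rw [Finset.card_erase_of_mem hpe, hc]
      have h1' : (e'.erase p).card = 1 := by rw [Finset.card_erase_of_mem hpe', hc']
      have hm := getD_min_mem (e.erase p) (by rw [← Finset.card_pos, h1]; omega) p
      have hm' := getD_min_mem (e'.erase p) (by rw [← Finset.card_pos, h1']; omega) p
      have heeq : e = {p, (e.erase p).min.getD p} := by
        have huniq := Finset.card_le_one.1 (le_of_eq h1)
        have hsing : e.erase p = {(e.erase p).min.getD p} :=
          Finset.eq_singleton_iff_unique_mem.2 ⟨hm, fun y hy => huniq y hy _ hm⟩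
        conv_lhs => rw [← Finset.insert_erase hpe, hsing]
      have heeq' : e' = {p, (e'.erase p).min.getD p} := by
        have huniq := Finset.card_le_one.1 (le_of_eq h1')
        have hsing : e'.erase p = {(e'.erase p).min.getD p} :=
          Finset.eq_singleton_iff_unique_mem.2 ⟨hm', fun y hy => huniq y hy _ hm'⟩
        conv_lhs => rw [← Finset.insert_erase hpe', hsing]
      rw [heeq, heeq', heq]
  have hT3ac := card_T3a hE hQE hQ4 hBf hp
  have hT3bc := card_T3b hE hQE hQ4 hBf hp
  have hT4c := card_T4 hE hQE hQ4 hBf hp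
  rw [← hT3a] at hT3ac
  rw [← hT3b] at hT3bc
  rw [← hT4] at hT4c
  have := Finset.card_le_card hsub
  have hu1 := Finset.card_union_le (S0 ∪ S1 ∪ T3a ∪ T3b) T4
  have hu2 := Finset.card_union_le (S0 ∪ S1 ∪ T3a) T3b
  have hu3 := Finset.card_union_le (S0 ∪ S1) T3a
  have hu4 := Finset.card_union_le S0 S1
  rw [dDeg]
  omega

lemma no_four_edge (hn : 103 ≤ n)
    (hd : ∀ u : Fin n, (dDeg E u : ℝ) > 9 / 8 * ((n : ℝ) - 1) + 5 / 16) : False := by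
  classical
  set A := Q.biUnion (Ap E Q) with hA
  have hdisj : ∀ q ∈ Q, ∀ r ∈ Q, q ≠ r → Disjoint (Ap E Q q) (Ap E Q r) := by
    intro q hq r hr hqr
    rw [Finset.disjoint_left]
    intro a haq har
    obtain ⟨haQ, hap, ⟨b, hb⟩⟩ := mem_Ap.1 har
    obtain ⟨haQ', hap', ⟨b', hb'⟩⟩ := mem_Ap.1 haq
    obtain ⟨hbQ, hbp, hba, hrab⟩ := mem_nbr.1 hb
    refine L2 hE hQE hQ4 hBf hr hq (Ne.symm hqr) haQ hbQ (Ne.symm hba) hrab ?_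
    obtain ⟨hbQ', hbp', hba', hqab'⟩ := mem_nbr.1 hb'
    exact hE _ hqab' _ (by intro z hz; simp at hz; rcases hz with h|h <;> subst h <;> simp)
  have hAcard : A.card = ∑ q ∈ Q, (Ap E Q q).card := Finset.card_biUnion hdisj
  have hAsub : A ⊆ Qᶜ := by
    intro a ha
    rw [hA, Finset.mem_biUnion] at ha
    obtain ⟨q, hq, haq⟩ := ha
    simpa using (mem_Ap.1 haq).1
  -- outN p ⊆ (Qᶜ \ A) ∪ Ap p
  have houtN : ∀ p ∈ Q, outN E Q p ⊆ (Qᶜ \ A) ∪ Ap E Q p := by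
    intro p hp a ha
    obtain ⟨haQ, hap, hpa⟩ := mem_outN.1 ha
    rw [Finset.mem_union]
    by_cases haA : a ∈ A
    · rw [hA, Finset.mem_biUnion] at haA
      obtain ⟨q, hq, haq⟩ := haA
      by_cases hqp : q = p
      · exact Or.inr (hqp ▸ haq)
      · exfalso
        obtain ⟨haQ', hap', ⟨b, hb⟩⟩ := mem_Ap.1 haq
        obtain ⟨hbQ, hbp, hba, hqab⟩ := mem_nbr.1 hb
        exact L2 hE hQE hQ4 hBf hq hp hqp haQ hbQ (Ne.symm hba) hqab hpa
    · exact Or.inl (Finset.mem_sdiff.2 ⟨by simpa using haQ, haA⟩)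
  have houtNc : ∀ p ∈ Q, (outN E Q p).card ≤ (Qᶜ \ A).card + (Ap E Q p).card := by
    intro p hp
    calc (outN E Q p).card ≤ ((Qᶜ \ A) ∪ Ap E Q p).card := Finset.card_le_card (houtN p hp)
    _ ≤ _ := Finset.card_union_le _ _
  -- sum of degrees over Q
  have hsum : ∑ p ∈ Q, dDeg E p ≤ 64 + 4 * (Qᶜ \ A).card + 4 * A.card := by
    calc ∑ p ∈ Q, dDeg E p
        ≤ ∑ p ∈ Q, (16 + (outN E Q p).card + 3 * (Ap E Q p).card) :=
          Finset.sum_le_sum (fun p hp => deg_bound hE hQE hQ4 hBf hp)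
      _ ≤ ∑ p ∈ Q, (16 + ((Qᶜ \ A).card + (Ap E Q p).card) + 3 * (Ap E Q p).card) :=
          Finset.sum_le_sum (fun p hp => by have := houtNc p hp; omega)
      _ = ∑ p ∈ Q, (16 + (Qᶜ \ A).card + 4 * (Ap E Q p).card) := by
          apply Finset.sum_congr rfl; intros; ring
      _ = 64 + 4 * (Qᶜ \ A).card + 4 * A.card := by
          rw [Finset.sum_add_distrib, Finset.sum_add_distrib, Finset.sum_const,
            Finset.sum_const, hQ4, hAcard, Finset.mul_sum]
          simp only [smul_eq_mul]
  have hcompl : (Qᶜ \ A).card + A.card = (Qᶜ : Finset (Fin n)).card :=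
    Finset.card_sdiff_add_card_eq_card hAsub
  have hQc : (Qᶜ : Finset (Fin n)).card = n - 4 := by
    rw [Finset.card_compl, hQ4]
    simp
  have hsum2 : ∑ p ∈ Q, dDeg E p ≤ 64 + 4 * (n - 4) := by omega
  -- lower bound from the degree hypothesis
  have hlow : (4 : ℝ) * (9 / 8 * ((n : ℝ) - 1) + 5 / 16) < ∑ p ∈ Q, (dDeg E p : ℝ) := by
    have := Finset.sum_lt_sum_of_nonempty
      (s := Q) (by rw [← Finset.card_pos, hQ4]; omega)
      (f := fun _ => 9 / 8 * ((n : ℝ) - 1) + 5 / 16) (g := fun p => (dDeg E p : ℝ))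
      (fun p hp => hd p)
    rw [Finset.sum_const, hQ4] at this
    convert this using 1
    push_cast
    · rfl
    ring
  have hcast : (∑ p ∈ Q, (dDeg E p : ℝ)) ≤ 64 + 4 * ((n : ℝ) - 4) := by
    rw [← Nat.cast_sum]
    calc ((∑ p ∈ Q, dDeg E p : ℕ) : ℝ) ≤ ((64 + 4 * (n - 4) : ℕ) : ℝ) := by
          exact_mod_cast hsum2
    _ = 64 + 4 * ((n : ℝ) - 4) := by
          have : (4 : ℕ) ≤ n := by omega
          push_cast [this]
          ring
  have hn' : (103 : ℝ) ≤ (n : ℝ) := by exact_mod_cast hn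
  linarith

end Final

theorem statement12 : ∃ n0 : ℕ, ∀ n : ℕ, n0 ≤ n → ∀ E : Finset (Finset (Fin n)),
    IsComplex E → ¬ HasCopy B E →
    (∀ u : Fin n, (dDeg E u : ℝ) > 9 / 8 * ((n : ℝ) - 1) + 5 / 16) →
    (¬ ∃ e ∈ E, e.card = 4) ∧ ∀ e ∈ E, e.card ≤ 3 := by
  refine ⟨103, fun n hn E hE hBf hd => ?_⟩
  have h4 : ¬ ∃ e ∈ E, e.card = 4 := by
    rintro ⟨Q, hQE, hQ4⟩
    exact no_four_edge hE hQE hQ4 hBf hn hd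
  refine ⟨h4, fun e he => ?_⟩
  by_contra hc
  push_neg at hc
  obtain ⟨Q, hQs, hQ4⟩ := Finset.exists_subset_card_eq (show 4 ≤ e.card by omega)
  exact h4 ⟨Q, hE _ he _ hQs, hQ4⟩
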